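/- arXiv:1709.08433 — 2 statements merged into one kernel-verified Lean document; each statement's English description precedes it below -/
import Mathlib

section
/- Let n ≥ 1 and s ≥ 1 be integers, k ≥ 1 an integer with k ≤ s − 1, and p ∈ (0,1). Then the probability that α_k(𝔾(n,p)) ≥ s is at most C(n,s) · C(C(s,2), ⌊ks/2⌋) · (1−p)^{C(s,2) − ⌊ks/2⌋}, where C(a,b) denotes the binomial coefficient. -/
/-- The star graph `K_{1,r}`: one center (vertex `0`) joined to `r` leaves. -/
def starGraph (r : ℕ) : SimpleGraph (Fin (r + 1)) where
  Adj u v := u ≠ v ∧ (u = 0 ∨ v = 0)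
  symm := by constructor; intro u v h; exact ⟨h.1.symm, h.2.symm⟩
  loopless := by constructor; intro u h; exact h.1 rfl

/-- `F` is contained in `G` as a subgraph, i.e. `G` has a copy of `F`. -/
def ContainsCopy {α β : Type*} (F : SimpleGraph α) (G : SimpleGraph β) : Prop :=
  ∃ f : F →g G, Function.Injective f

/-- `H` is an `F`-saturated subgraph of `G`: it is a spanning subgraph of `G` (same vertex
set, `H ≤ G`), it is `F`-free, and adding any edge of `G` missing from `H` creates a copy
of `F`. -/
def IsSatSubgraph {V α : Type*} (G : SimpleGraph V) (F : SimpleGraph α)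
    (H : SimpleGraph V) : Prop :=
  H ≤ G ∧ ¬ ContainsCopy F H ∧
    ∀ u v : V, G.Adj u v → ¬ H.Adj u v →
      ContainsCopy F (H ⊔ SimpleGraph.fromEdgeSet {s(u, v)})

/-- `sat(G, F)`: the minimum number of edges of an `F`-saturated subgraph of `G`. -/
noncomputable def satNum {V α : Type*} (G : SimpleGraph V) (F : SimpleGraph α) : ℕ :=
  sInf {m | ∃ H : SimpleGraph V, IsSatSubgraph G F H ∧ H.edgeSet.ncard = m}

/-- `S` is `k`-independent in `G`: the induced subgraph `G[S]` has maximum degree at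
most `k`, i.e. every vertex of `S` has at most `k` neighbours inside `S`. -/
def IsKIndepSet {V : Type*} (G : SimpleGraph V) (k : ℕ) (S : Set V) : Prop :=
  ∀ v ∈ S, (S ∩ G.neighborSet v).ncard ≤ k

/-- `α_k(G)`: the maximum cardinality of a `k`-independent set in `G`. -/
noncomputable def kIndepNum {V : Type*} (G : SimpleGraph V) (k : ℕ) : ℕ :=
  sSup {m | ∃ S : Set V, IsKIndepSet G k S ∧ S.ncard = m}

/-- `α(G)`: the independence number of `G`. -/
noncomputable def indepNum {V : Type*} (G : SimpleGraph V) : ℕ :=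
  sSup {m | ∃ S : Set V, (∀ u ∈ S, ∀ v ∈ S, ¬ G.Adj u v) ∧ S.ncard = m}

/-- The probability, under the Erdős–Rényi random graph `𝔾(n, p)`, that the sampled graph
lies in the set `A`; each labelled graph `G` on the vertex set `{1, …, n}` is sampled
with probability `p ^ e(G) * (1 - p) ^ (C(n,2) - e(G))`. -/
noncomputable def gnpProb (n : ℕ) (p : ℝ) (A : Set (SimpleGraph (Fin n))) : ℝ :=
  ∑ G : SimpleGraph (Fin n),
    A.indicator (fun G => p ^ G.edgeSet.ncard * (1 - p) ^ (n.choose 2 - G.edgeSet.ncard)) G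

open scoped Classical

/-! ### Auxiliary lemmas -/

/-- The non-diagonal unordered pairs inside a finset. -/
noncomputable def pairsIn {α : Type*} [DecidableEq α] (S : Finset α) : Finset (Sym2 α) :=
  S.sym2.filter (fun e => ¬ e.IsDiag)

lemma mem_pairsIn {α : Type*} [DecidableEq α] {S : Finset α} {e : Sym2 α} :
    e ∈ pairsIn S ↔ (∀ a ∈ e, a ∈ S) ∧ ¬ e.IsDiag := by
  simp [pairsIn, Finset.mem_sym2_iff]

lemma card_pairsIn {α : Type*} [DecidableEq α] (S : Finset α) :
    (pairsIn S).card = S.card.choose 2 := by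
  have hsplit := Finset.card_filter_add_card_filter_not
    (s := S.sym2) (p := fun e => e.IsDiag)
  have himg : S.sym2.filter (fun e => e.IsDiag) = S.image Sym2.diag := by
    ext e
    simp only [Finset.mem_filter, Finset.mem_image]
    constructor
    · rintro ⟨he, hd⟩
      obtain ⟨a, rfl⟩ := (⟨e.diagElem hd, Sym2.diag_diagElem hd⟩ : ∃ a, Sym2.diag a = e)
      exact ⟨a, (Finset.diag_mem_sym2_iff).1 he, rfl⟩
    · rintro ⟨a, ha, rfl⟩
      exact ⟨(Finset.diag_mem_sym2_iff).2 ha, Sym2.diag_isDiag a⟩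
  rw [himg, Finset.card_image_of_injective _ Sym2.diag_injective] at hsplit
  have hsym2 : S.sym2.card = S.card.choose 2 + S.card := by
    rw [Finset.card_sym2, Nat.choose_succ_succ, Nat.choose_one_right, Nat.add_comm]
  unfold pairsIn
  omega

lemma ncard_edgeSet (n : ℕ) (G : SimpleGraph (Fin n)) :
    G.edgeSet.ncard = G.edgeFinset.card := by
  rw [← SimpleGraph.coe_edgeFinset, Set.ncard_coe_finset]

lemma binom_sum' {α : Type*} [DecidableEq α] (p q : ℝ) (A : Finset α) :
    ∑ E ∈ A.powerset, p ^ E.card * q ^ (A.card - E.card) = (p + q) ^ A.card := by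
  have h := Finset.prod_add (fun _ => p) (fun _ => q) A
  simp only [Finset.prod_const] at h
  rw [h]
  refine Finset.sum_congr rfl (fun E hE => ?_)
  rw [Finset.card_sdiff_of_subset (Finset.mem_powerset.1 hE)]

lemma sum_weight (n : ℕ) (p : ℝ) (D : Finset (Sym2 (Fin n)))
    (hD : D ⊆ (⊤ : SimpleGraph (Fin n)).edgeFinset) :
    ∑ G : SimpleGraph (Fin n),
      (if Disjoint D G.edgeFinset then
        p ^ G.edgeFinset.card * (1 - p) ^ (n.choose 2 - G.edgeFinset.card) else 0)
      = (1 - p) ^ D.card := by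
  set K := (⊤ : SimpleGraph (Fin n)).edgeFinset with hKdef
  have hK : K.card = n.choose 2 := by
    rw [hKdef, SimpleGraph.card_edgeFinset_top_eq_card_choose_two, Fintype.card_fin]
  have hreindex : ∑ G : SimpleGraph (Fin n),
      (if Disjoint D G.edgeFinset then
        p ^ G.edgeFinset.card * (1 - p) ^ (n.choose 2 - G.edgeFinset.card) else 0)
      = ∑ E ∈ K.powerset,
        (if Disjoint D E then p ^ E.card * (1 - p) ^ (n.choose 2 - E.card) else 0) := by
    refine Finset.sum_nbij' (i := fun G => G.edgeFinset)
      (j := fun E => SimpleGraph.fromEdgeSet ↑E) ?_ ?_ ?_ ?_ ?_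
    · intro G _
      exact Finset.mem_powerset.2 (SimpleGraph.edgeFinset_mono le_top)
    · intro E _; exact Finset.mem_univ _
    · intro G _
      show SimpleGraph.fromEdgeSet ↑G.edgeFinset = G
      rw [SimpleGraph.coe_edgeFinset, SimpleGraph.fromEdgeSet_edgeSet]
    · intro E hE
      ext e
      simp only [SimpleGraph.mem_edgeFinset, SimpleGraph.edgeSet_fromEdgeSet,
        Set.mem_diff, Finset.mem_coe, Set.mem_setOf_eq]
      refine ⟨fun h => h.1, fun h => ⟨h, ?_⟩⟩
      exact SimpleGraph.not_isDiag_of_mem_edgeFinset (Finset.mem_powerset.1 hE h)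
    · intro G _; rfl
  rw [hreindex, ← Finset.sum_filter]
  have hfilt : K.powerset.filter (fun E => Disjoint D E) = (K \ D).powerset := by
    ext E
    simp only [Finset.mem_filter, Finset.mem_powerset, Finset.subset_sdiff]
    tauto
  rw [hfilt]
  have hcard : (K \ D).card = n.choose 2 - D.card := by rw [Finset.card_sdiff_of_subset hD, hK]
  have hDle : D.card ≤ n.choose 2 := by rw [← hK]; exact Finset.card_le_card hD
  have hterm : ∀ E ∈ (K \ D).powerset,
      p ^ E.card * (1 - p) ^ (n.choose 2 - E.card)
      = (p ^ E.card * (1 - p) ^ ((K \ D).card - E.card)) * (1 - p) ^ D.card := by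
    intro E hE
    have hEle : E.card ≤ (K \ D).card := Finset.card_le_card (Finset.mem_powerset.1 hE)
    have : n.choose 2 - E.card = ((K \ D).card - E.card) + D.card := by omega
    rw [this, pow_add, mul_assoc]
  rw [Finset.sum_congr rfl hterm, ← Finset.sum_mul, binom_sum']
  simp

lemma handshake (n k : ℕ) (G : SimpleGraph (Fin n)) (S : Finset (Fin n))
    (hind : IsKIndepSet G k ↑S) :
    (pairsIn S ∩ G.edgeFinset).card * 2 ≤ k * S.card := by
  set H : SimpleGraph ↥(↑S : Set (Fin n)) := G.induce (↑S : Set (Fin n)) with hH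
  have hdeg : ∀ v, H.degree v ≤ k := by
    intro v
    have h1 : (H.neighborFinset v).card ≤ (S.filter fun u => G.Adj ↑v u).card := by
      refine Finset.card_le_card_of_injOn Subtype.val ?_ ?_
      · intro u hu
        simp only [Finset.mem_coe, SimpleGraph.mem_neighborFinset, hH, SimpleGraph.comap_adj] at hu
        simp only [Finset.mem_coe, Finset.mem_filter]
        exact ⟨u.2, hu⟩
      · exact Set.injOn_of_injective Subtype.val_injective
    have h2 : (S.filter fun u => G.Adj ↑v u).card ≤ k := by
      have hco : (↑(S.filter fun u => G.Adj ↑v u) : Set (Fin n))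
          = ↑S ∩ G.neighborSet ↑v := by
        ext x; simp [SimpleGraph.mem_neighborSet]
      have := hind ↑v v.2
      rw [← hco, Set.ncard_coe_finset] at this
      exact this
    exact le_trans h1 h2
  have hsum := H.sum_degrees_eq_twice_card_edges
  have hcardS : Fintype.card ↥(↑S : Set (Fin n)) = S.card := by
    rw [← Set.toFinset_card, Finset.toFinset_coe]
  have hE2 : 2 * H.edgeFinset.card ≤ k * S.card := by
    calc 2 * H.edgeFinset.card = ∑ v, H.degree v := hsum.symm
      _ ≤ Fintype.card ↥(↑S : Set (Fin n)) * k := by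
          simpa using Finset.sum_le_card_nsmul Finset.univ _ k (fun v _ => hdeg v)
      _ = k * S.card := by rw [hcardS, Nat.mul_comm]
  have hsub : pairsIn S ∩ G.edgeFinset ⊆ H.edgeFinset.image (Sym2.map Subtype.val) := by
    intro e
    induction e using Sym2.ind with
    | _ u v =>
      intro he
      rw [Finset.mem_inter, mem_pairsIn] at he
      obtain ⟨⟨hmem, _⟩, hadj⟩ := he
      have hu : u ∈ (↑S : Set (Fin n)) := hmem u (by simp)
      have hv : v ∈ (↑S : Set (Fin n)) := hmem v (by simp)
      rw [SimpleGraph.mem_edgeFinset, SimpleGraph.mem_edgeSet] at hadj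
      refine Finset.mem_image.2 ⟨s(⟨u, hu⟩, ⟨v, hv⟩), ?_, ?_⟩
      · rw [SimpleGraph.mem_edgeFinset, SimpleGraph.mem_edgeSet]
        exact hadj
      · rfl
  have hle : (pairsIn S ∩ G.edgeFinset).card ≤ H.edgeFinset.card :=
    le_trans (Finset.card_le_card hsub) Finset.card_image_le
  omega

lemma exists_kindep_finset (n s k : ℕ) (G : SimpleGraph (Fin n))
    (hG : s ≤ kIndepNum G k) :
    ∃ S : Finset (Fin n), S.card = s ∧ IsKIndepSet G k ↑S := by
  have hne : {m | ∃ S : Set (Fin n), IsKIndepSet G k S ∧ S.ncard = m}.Nonempty :=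
    ⟨0, ∅, fun v hv => absurd hv (Set.notMem_empty v), by simp⟩
  have hbdd : BddAbove {m | ∃ S : Set (Fin n), IsKIndepSet G k S ∧ S.ncard = m} := by
    refine ⟨n, ?_⟩
    rintro m ⟨S, _, rfl⟩
    calc S.ncard ≤ (Set.univ : Set (Fin n)).ncard :=
          Set.ncard_le_ncard (Set.subset_univ S) Set.finite_univ
      _ = n := by rw [Set.ncard_univ, Nat.card_eq_fintype_card, Fintype.card_fin]
  obtain ⟨S0, hS0ind, hS0card⟩ := Nat.sSup_mem hne hbdd
  have hfin : S0.Finite := Set.toFinite S0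
  have hcard : s ≤ hfin.toFinset.card := by
    rw [← Set.ncard_eq_toFinset_card]
    rw [hS0card]; exact hG
  obtain ⟨S, hSsub, hScard⟩ := Finset.exists_subset_card_eq hcard
  refine ⟨S, hScard, ?_⟩
  intro v hv
  have hsub' : (↑S : Set (Fin n)) ⊆ S0 := by
    intro x hx
    exact hfin.mem_toFinset.1 (hSsub hx)
  calc ((↑S : Set (Fin n)) ∩ G.neighborSet v).ncard
      ≤ (S0 ∩ G.neighborSet v).ncard :=
        Set.ncard_le_ncard (Set.inter_subset_inter_left _ hsub')
          ((hfin.inter_of_left _))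
    _ ≤ k := hS0ind v (hsub' hv)

lemma exists_witness (n s k : ℕ) (G : SimpleGraph (Fin n))
    (hG : s ≤ kIndepNum G k) :
    ∃ S : Finset (Fin n), S.card = s ∧ ∃ T ⊆ pairsIn S,
      T.card = s.choose 2 - k * s / 2 ∧ Disjoint T G.edgeFinset := by
  obtain ⟨S, hScard, hSind⟩ := exists_kindep_finset n s k G hG
  have hhs := handshake n k G S hSind
  have hES : (pairsIn S ∩ G.edgeFinset).card ≤ k * s / 2 := by
    rw [Nat.le_div_iff_mul_le (by norm_num)]
    rw [hScard] at hhs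
    exact hhs
  have h1 : (pairsIn S \ G.edgeFinset).card + (pairsIn S ∩ G.edgeFinset).card
      = (pairsIn S).card := Finset.card_sdiff_add_card_inter _ _
  rw [card_pairsIn, hScard] at h1
  have hsd : s.choose 2 - k * s / 2 ≤ (pairsIn S \ G.edgeFinset).card := by omega
  obtain ⟨T, hTsub, hTcard⟩ := Finset.exists_subset_card_eq hsd
  refine ⟨S, hScard, T, hTsub.trans Finset.sdiff_subset, hTcard, ?_⟩
  rw [Finset.disjoint_left]
  intro e heT heG
  exact (Finset.mem_sdiff.1 (hTsub heT)).2 heG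

/-- Let `n ≥ 1` and `s ≥ 1` be integers, `k ≥ 1` an integer with
`k ≤ s - 1`, and `p ∈ (0,1)`. Then the probability that `α_k(𝔾(n,p)) ≥ s` is at most
`C(n,s) · C(C(s,2), ⌊ks/2⌋) · (1-p)^(C(s,2) - ⌊ks/2⌋)`. -/
theorem kIndepNum_random_graph_tail (n s k : ℕ) (hn : 1 ≤ n) (hs : 1 ≤ s) (hk : 1 ≤ k)
    (hks : k ≤ s - 1) (p : ℝ) (hp0 : 0 < p) (hp1 : p < 1) :
    gnpProb n p {G | s ≤ kIndepNum G k} ≤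
      (n.choose s : ℝ) * ((s.choose 2).choose (k * s / 2) : ℝ)
        * (1 - p) ^ (s.choose 2 - k * s / 2) := by
  classical
  set c := s.choose 2 - k * s / 2 with hc
  have hm : k * s / 2 ≤ s.choose 2 := by
    have h1 : k * s ≤ (s - 1) * s := Nat.mul_le_mul_right s hks
    have h2 : k * s / 2 ≤ ((s - 1) * s) / 2 := Nat.div_le_div_right h1
    have h3 : s.choose 2 = s * (s - 1) / 2 := Nat.choose_two_right s
    rw [h3]
    calc k * s / 2 ≤ ((s - 1) * s) / 2 := h2
      _ = s * (s - 1) / 2 := by rw [Nat.mul_comm]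
  set W := (Finset.powersetCard s (Finset.univ : Finset (Fin n))).sigma
      (fun S : Finset (Fin n) => Finset.powersetCard c (pairsIn S)) with hW
  have hq0 : (0:ℝ) ≤ 1 - p := by linarith
  have hwpos : ∀ G : SimpleGraph (Fin n),
      0 ≤ p ^ G.edgeSet.ncard * (1 - p) ^ (n.choose 2 - G.edgeSet.ncard) :=
    fun G => mul_nonneg (pow_nonneg hp0.le _) (pow_nonneg hq0 _)
  have hnn : ∀ G : SimpleGraph (Fin n), ∀ x ∈ W,
      (0:ℝ) ≤ (if Disjoint x.2 G.edgeFinset then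
        p ^ G.edgeSet.ncard * (1 - p) ^ (n.choose 2 - G.edgeSet.ncard) else 0) := by
    intro G x _
    split
    · exact hwpos G
    · exact le_refl 0
  have key : ∀ G : SimpleGraph (Fin n),
      ({G | s ≤ kIndepNum G k} : Set (SimpleGraph (Fin n))).indicator
        (fun G => p ^ G.edgeSet.ncard * (1 - p) ^ (n.choose 2 - G.edgeSet.ncard)) G
      ≤ ∑ x ∈ W, (if Disjoint x.2 G.edgeFinset then
          p ^ G.edgeSet.ncard * (1 - p) ^ (n.choose 2 - G.edgeSet.ncard) else 0) := by
    intro G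
    by_cases hGA : G ∈ ({G | s ≤ kIndepNum G k} : Set (SimpleGraph (Fin n)))
    · rw [Set.indicator_of_mem hGA]
      obtain ⟨S, hScard, T, hTsub, hTcard, hdisj⟩ := exists_witness n s k G hGA
      have hmem : (⟨S, T⟩ : Σ _ : Finset (Fin n), Finset (Sym2 (Fin n))) ∈ W := by
        rw [hW, Finset.mem_sigma]
        exact ⟨Finset.mem_powersetCard_univ.2 hScard,
          Finset.mem_powersetCard.2 ⟨hTsub, hTcard⟩⟩
      have := Finset.single_le_sum (hnn G) hmem
      rwa [if_pos hdisj] at this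
    · rw [Set.indicator_of_notMem hGA]
      exact Finset.sum_nonneg (hnn G)
  have hWcard : W.card = n.choose s * (s.choose 2).choose c := by
    rw [hW, Finset.card_sigma]
    have hconst : ∀ S ∈ Finset.powersetCard s (Finset.univ : Finset (Fin n)),
        (Finset.powersetCard c (pairsIn S)).card = (s.choose 2).choose c := by
      intro S hS
      rw [Finset.card_powersetCard, card_pairsIn, Finset.mem_powersetCard_univ.1 hS]
    rw [Finset.sum_congr rfl hconst, Finset.sum_const, smul_eq_mul,
      Finset.card_powersetCard, Finset.card_univ, Fintype.card_fin]
  have hsymm : (s.choose 2).choose c = (s.choose 2).choose (k * s / 2) := by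
    rw [hc]
    exact Nat.choose_symm hm
  calc gnpProb n p {G | s ≤ kIndepNum G k}
      ≤ ∑ G : SimpleGraph (Fin n), ∑ x ∈ W, (if Disjoint x.2 G.edgeFinset then
          p ^ G.edgeSet.ncard * (1 - p) ^ (n.choose 2 - G.edgeSet.ncard) else 0) := by
        rw [gnpProb]
        exact Finset.sum_le_sum (fun G _ => key G)
    _ = ∑ x ∈ W, ∑ G : SimpleGraph (Fin n), (if Disjoint x.2 G.edgeFinset then
          p ^ G.edgeSet.ncard * (1 - p) ^ (n.choose 2 - G.edgeSet.ncard) else 0) :=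
        Finset.sum_comm
    _ = ∑ x ∈ W, (1 - p) ^ c := by
        refine Finset.sum_congr rfl (fun x hx => ?_)
        rw [hW, Finset.mem_sigma] at hx
        have hTsub : x.2 ⊆ pairsIn x.1 := (Finset.mem_powersetCard.1 hx.2).1
        have hTcard : x.2.card = c := (Finset.mem_powersetCard.1 hx.2).2
        have hTK : x.2 ⊆ (⊤ : SimpleGraph (Fin n)).edgeFinset := by
          intro e he
          rw [SimpleGraph.mem_edgeFinset, SimpleGraph.edgeSet_top]
          exact (mem_pairsIn.1 (hTsub he)).2
        have hsw := sum_weight n p x.2 hTK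
        rw [← hTcard, ← hsw]
        refine Finset.sum_congr rfl (fun G _ => ?_)
        rw [ncard_edgeSet]
    _ = (W.card : ℝ) * (1 - p) ^ c := by
        rw [Finset.sum_const, nsmul_eq_mul]
    _ = (n.choose s : ℝ) * ((s.choose 2).choose (k * s / 2) : ℝ) * (1 - p) ^ c := by
        rw [hWcard, hsymm.symm]
        push_cast
        ring
end

section
/- For every graph G on n vertices and every integer r ≥ 2, sat(G, K_{1,r}) ≥ (r−1)·(n − α_{r−2}(G))/2. -/
lemma star_copy_iff {n r : ℕ} (H : SimpleGraph (Fin n)) [DecidableRel H.Adj] :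
    ContainsCopy (starGraph r) H ↔ ∃ v, r ≤ H.degree v := by
  constructor
  · rintro ⟨f, hf⟩
    refine ⟨f 0, ?_⟩
    have hsub : (Finset.univ.image fun i : Fin r => f i.succ) ⊆ H.neighborFinset (f 0) := by
      intro x hx
      simp only [Finset.mem_image, Finset.mem_univ, true_and] at hx
      obtain ⟨i, rfl⟩ := hx
      rw [SimpleGraph.mem_neighborFinset]
      exact f.map_adj ⟨(Fin.succ_ne_zero i).symm, Or.inl rfl⟩
    have hinj : Function.Injective (fun i : Fin r => f i.succ) :=
      fun a b h => Fin.succ_injective r (hf h)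
    calc r = (Finset.univ.image fun i : Fin r => f i.succ).card := by
            rw [Finset.card_image_of_injective _ hinj, Finset.card_univ, Fintype.card_fin]
      _ ≤ _ := Finset.card_le_card hsub
    -- degree = card neighborFinset : defeq
  · rintro ⟨v, hv⟩
    obtain ⟨s, hs, hcard⟩ := Finset.exists_subset_card_eq hv
    set g := s.orderIsoOfFin hcard with hg
    refine ⟨⟨fun x => if h : x = 0 then v else (g (x.pred h) : Fin n), ?_⟩, ?_⟩
    · rintro a b ⟨hne, h0⟩
      have key : ∀ a b : Fin (r+1), a = 0 → b ≠ 0 →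
          H.Adj (if h : a = 0 then v else (g (a.pred h) : Fin n))
            (if h : b = 0 then v else (g (b.pred h) : Fin n)) := by
        intro a b ha hb
        subst ha
        rw [dif_pos rfl, dif_neg hb]
        have : (g (b.pred hb) : Fin n) ∈ H.neighborFinset v := hs (g (b.pred hb)).2
        rwa [SimpleGraph.mem_neighborFinset] at this
      rcases h0 with ha | hb
      · exact key a b ha (fun h => hne (ha.trans h.symm))
      · exact (key b a hb (fun h => hne (h.trans hb.symm))).symm
    · intro a b hab
      have hab' : (fun x : Fin (r+1) => if h : x = 0 then v else (g (x.pred h) : Fin n)) a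
          = (fun x : Fin (r+1) => if h : x = 0 then v else (g (x.pred h) : Fin n)) b := hab
      dsimp only at hab'
      by_cases ha : a = 0 <;> by_cases hb : b = 0
      · rw [ha, hb]
      · rw [dif_pos ha, dif_neg hb] at hab'
        exfalso
        have : (g (b.pred hb) : Fin n) ∈ H.neighborFinset v := hs (g (b.pred hb)).2
        rw [SimpleGraph.mem_neighborFinset] at this
        exact H.irrefl (hab' ▸ this)
      · rw [dif_neg ha, dif_pos hb] at hab'
        exfalso
        have : (g (a.pred ha) : Fin n) ∈ H.neighborFinset v := hs (g (a.pred ha)).2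
        rw [SimpleGraph.mem_neighborFinset] at this
        exact H.irrefl (hab' ▸ this)
      · rw [dif_neg ha, dif_neg hb] at hab'
        have := g.injective (Subtype.coe_injective hab')
        rwa [Fin.pred_inj] at this

lemma adj_sup_single {V : Type*} (H : SimpleGraph V) {u v : V} (huv : u ≠ v) (a b : V) :
    (H ⊔ SimpleGraph.fromEdgeSet {s(u, v)}).Adj a b ↔
      H.Adj a b ∨ (a = u ∧ b = v) ∨ (a = v ∧ b = u) := by
  simp only [SimpleGraph.sup_adj, SimpleGraph.fromEdgeSet_adj, Set.mem_singleton_iff,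
    Sym2.eq_iff]
  constructor
  · rintro (h | ⟨(⟨rfl, rfl⟩ | ⟨rfl, rfl⟩), hne⟩)
    · exact Or.inl h
    · exact Or.inr (Or.inl ⟨rfl, rfl⟩)
    · exact Or.inr (Or.inr ⟨rfl, rfl⟩)
  · rintro (h | ⟨rfl, rfl⟩ | ⟨rfl, rfl⟩)
    · exact Or.inl h
    · exact Or.inr ⟨Or.inl ⟨rfl, rfl⟩, huv⟩
    · exact Or.inr ⟨Or.inr ⟨rfl, rfl⟩, huv.symm⟩

lemma exists_sat_subgraph {n r : ℕ} (hr : 2 ≤ r) (G : SimpleGraph (Fin n)) :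
    ∃ H : SimpleGraph (Fin n), IsSatSubgraph G (starGraph r) H := by
  classical
  set A : Finset (SimpleGraph (Fin n)) :=
    Finset.univ.filter (fun H => H ≤ G ∧ ¬ ContainsCopy (starGraph r) H) with hA
  have hbot : (⊥ : SimpleGraph (Fin n)) ∈ A := by
    rw [hA, Finset.mem_filter]
    refine ⟨Finset.mem_univ _, bot_le, ?_⟩
    rw [star_copy_iff]
    rintro ⟨v, hv⟩
    rw [SimpleGraph.bot_degree] at hv
    omega
  obtain ⟨H, hHA, hmax⟩ := A.exists_max_image (fun H => H.edgeSet.ncard) ⟨⊥, hbot⟩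
  rw [hA, Finset.mem_filter] at hHA
  refine ⟨H, hHA.2.1, hHA.2.2, ?_⟩
  intro u v huv hnuv
  by_contra hcon
  set H' := H ⊔ SimpleGraph.fromEdgeSet {s(u, v)} with hH'
  have hle : H' ≤ G := by
    rw [hH']
    refine sup_le hHA.2.1 ?_
    intro a b hab
    rw [SimpleGraph.fromEdgeSet_adj] at hab
    rcases Sym2.eq_iff.1 hab.1 with ⟨rfl, rfl⟩ | ⟨rfl, rfl⟩
    · exact huv
    · exact huv.symm
  have hmem : H' ∈ A := by
    rw [hA, Finset.mem_filter]
    exact ⟨Finset.mem_univ _, hle, hcon⟩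
  have hcard : H.edgeSet.ncard < H'.edgeSet.ncard := by
    have hne : u ≠ v := huv.ne
    have : H'.edgeSet = insert s(u, v) H.edgeSet := by
      rw [hH', SimpleGraph.edgeSet_sup, SimpleGraph.edgeSet_fromEdgeSet]
      rw [Set.union_comm]
      congr 1
      ext e
      simp only [Set.mem_diff, Set.mem_singleton_iff, Set.mem_setOf_eq]
      constructor
      · rintro ⟨rfl, _⟩; rfl
      · rintro rfl; exact ⟨rfl, by simp [Sym2.isDiag_iff_proj_eq, hne]⟩
    rw [this, Set.ncard_insert_of_notMem (by rwa [SimpleGraph.mem_edgeSet]) H.edgeSet.toFinite]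
    omega
  exact absurd (hmax H' hmem) (by omega)

lemma sat_bound_nat {n r : ℕ} (hr : 2 ≤ r) (G H : SimpleGraph (Fin n))
    (hH : IsSatSubgraph G (starGraph r) H) :
    ∃ a : ℕ, a ≤ kIndepNum G (r - 2) ∧ a ≤ n ∧
      (r - 1) * (n - a) ≤ 2 * H.edgeSet.ncard := by
  classical
  set S : Finset (Fin n) := Finset.univ.filter (fun v => H.degree v ≤ r - 2) with hSdef
  have hmemS : ∀ v, v ∈ S ↔ H.degree v ≤ r - 2 := by
    intro v; rw [hSdef, Finset.mem_filter]; simp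
  obtain ⟨hle, hfree, hsat⟩ := hH
  -- claim: G-neighbours inside S are H-neighbours
  have claim : ∀ v ∈ S, ∀ u ∈ S, G.Adj v u → H.Adj v u := by
    intro v hv u hu hadj
    by_contra hna
    have hvu : v ≠ u := hadj.ne
    set H' := H ⊔ SimpleGraph.fromEdgeSet {s(v, u)} with hH'
    have hcopy : ContainsCopy (starGraph r) H' := hsat v u hadj hna
    obtain ⟨c, hc⟩ := (star_copy_iff H').1 hcopy
    rw [← SimpleGraph.card_neighborFinset_eq_degree] at hc
    by_cases hcv : c = v
    · subst hcv
      have hsub : H'.neighborFinset c ⊆ insert u (H.neighborFinset c) := by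
        intro w hw
        rw [SimpleGraph.mem_neighborFinset, hH', adj_sup_single H hvu] at hw
        rcases hw with h | ⟨_, rfl⟩ | ⟨h, _⟩
        · exact Finset.mem_insert_of_mem ((SimpleGraph.mem_neighborFinset _ _ _).2 h)
        · exact Finset.mem_insert_self _ _
        · exact absurd h hvu
      have h1 := Finset.card_le_card hsub
      have h2 := Finset.card_insert_le u (H.neighborFinset c)
      rw [SimpleGraph.card_neighborFinset_eq_degree] at h2
      have h3 := (hmemS c).1 hv
      omega
    · by_cases hcu : c = u
      · subst hcu
        have hsub : H'.neighborFinset c ⊆ insert v (H.neighborFinset c) := by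
          intro w hw
          rw [SimpleGraph.mem_neighborFinset, hH', adj_sup_single H hvu] at hw
          rcases hw with h | ⟨h, _⟩ | ⟨_, rfl⟩
          · exact Finset.mem_insert_of_mem ((SimpleGraph.mem_neighborFinset _ _ _).2 h)
          · exact absurd h.symm hvu
          · exact Finset.mem_insert_self _ _
        have h1 := Finset.card_le_card hsub
        have h2 := Finset.card_insert_le v (H.neighborFinset c)
        rw [SimpleGraph.card_neighborFinset_eq_degree] at h2
        have h3 := (hmemS c).1 hu
        omega
      · have hsub : H'.neighborFinset c ⊆ H.neighborFinset c := by
          intro w hw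
          rw [SimpleGraph.mem_neighborFinset, hH', adj_sup_single H hvu] at hw
          rcases hw with h | ⟨h, _⟩ | ⟨h, _⟩
          · exact (SimpleGraph.mem_neighborFinset _ _ _).2 h
          · exact absurd h hcv
          · exact absurd h hcu
        have h1 := Finset.card_le_card hsub
        refine hfree ((star_copy_iff H).2 ⟨c, ?_⟩)
        rw [← SimpleGraph.card_neighborFinset_eq_degree]
        omega
  -- S is (r-2)-independent in G
  have hindep : IsKIndepSet G (r - 2) ↑S := by
    intro v hv
    have hsub : (↑S : Set (Fin n)) ∩ G.neighborSet v ⊆ H.neighborSet v := by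
      rintro u ⟨huS, hu⟩
      exact claim v (by exact_mod_cast hv) u (by exact_mod_cast huS) hu
    calc ((↑S : Set (Fin n)) ∩ G.neighborSet v).ncard
        ≤ (H.neighborSet v).ncard := Set.ncard_le_ncard hsub (H.neighborSet v).toFinite
      _ = H.degree v := by
          rw [← SimpleGraph.card_neighborFinset_eq_degree, SimpleGraph.neighborFinset_def,
            ← Set.ncard_eq_toFinset_card']
      _ ≤ r - 2 := (hmemS v).1 (by exact_mod_cast hv)
  refine ⟨S.card, ?_, ?_, ?_⟩
  · -- S.card ≤ kIndepNum
    apply le_csSup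
    · refine ⟨n, ?_⟩
      rintro m ⟨T, _, rfl⟩
      calc T.ncard ≤ (Set.univ : Set (Fin n)).ncard :=
            Set.ncard_le_ncard (Set.subset_univ T) Set.finite_univ
        _ = n := by rw [Set.ncard_univ]; simp
    · exact ⟨↑S, hindep, Set.ncard_coe_finset S⟩
  · calc S.card ≤ Finset.univ.card := Finset.card_le_card (Finset.subset_univ S)
      _ = n := by simp
  · -- degree sum bound
    have hsum : ∑ v, H.degree v = 2 * H.edgeFinset.card :=
      SimpleGraph.sum_degrees_eq_twice_card_edges H
    have hlow : ∀ v ∈ Finset.univ \ S, r - 1 ≤ H.degree v := by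
      intro v hv
      rw [Finset.mem_sdiff] at hv
      have := hv.2
      rw [hmemS v] at this
      omega
    have h1 : (Finset.univ \ S).card * (r - 1) ≤ ∑ v ∈ Finset.univ \ S, H.degree v := by
      have := Finset.card_nsmul_le_sum (Finset.univ \ S) (fun v => H.degree v) (r - 1) hlow
      rwa [smul_eq_mul] at this
    have h2 : ∑ v ∈ Finset.univ \ S, H.degree v ≤ ∑ v, H.degree v :=
      Finset.sum_le_sum_of_subset (Finset.subset_univ _)
    have h3 : (Finset.univ \ S).card = n - S.card := by
      rw [Finset.card_sdiff_of_subset (Finset.subset_univ S)]; simp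
    have h4 : H.edgeSet.ncard = H.edgeFinset.card := by
      rw [← SimpleGraph.coe_edgeFinset, Set.ncard_coe_finset]
    rw [h4]
    calc (r - 1) * (n - S.card) = (Finset.univ \ S).card * (r - 1) := by rw [h3, Nat.mul_comm]
      _ ≤ ∑ v, H.degree v := le_trans h1 h2
      _ = 2 * H.edgeFinset.card := hsum

/-- For every graph `G` on `n` vertices and every integer `r ≥ 2`,
`sat(G, K_{1,r}) ≥ (r-1)(n - α_{r-2}(G))/2`. -/
theorem sat_star_lower_bound (n r : ℕ) (hr : 2 ≤ r) (G : SimpleGraph (Fin n)) :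
    ((r : ℝ) - 1) * ((n : ℝ) - (kIndepNum G (r - 2) : ℝ)) / 2
      ≤ (satNum G (starGraph r) : ℝ) := by
  classical
  obtain ⟨H0, hH0⟩ := exists_sat_subgraph hr G
  have hne : {m | ∃ H : SimpleGraph (Fin n), IsSatSubgraph G (starGraph r) H ∧
      H.edgeSet.ncard = m}.Nonempty := ⟨H0.edgeSet.ncard, H0, hH0, rfl⟩
  obtain ⟨H, hH, hcard⟩ := Nat.sInf_mem hne
  obtain ⟨a, ha1, ha2, ha3⟩ := sat_bound_nat hr G H hH
  have hEq : (satNum G (starGraph r) : ℝ) = (H.edgeSet.ncard : ℝ) := by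
    rw [satNum, ← hcard]
  rw [hEq]
  have key : ((r : ℝ) - 1) * ((n : ℝ) - (a : ℝ)) ≤ 2 * (H.edgeSet.ncard : ℝ) := by
    have hcast : ((r - 1 : ℕ) : ℝ) * (((n : ℕ) - a : ℕ) : ℝ) ≤ 2 * (H.edgeSet.ncard : ℝ) := by
      exact_mod_cast ha3
    rwa [Nat.cast_sub (by omega), Nat.cast_sub ha2, Nat.cast_one] at hcast
  have hα : (a : ℝ) ≤ (kIndepNum G (r - 2) : ℝ) := by exact_mod_cast ha1
  have hr1 : (0 : ℝ) ≤ (r : ℝ) - 1 := by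
    have : (2 : ℝ) ≤ r := by exact_mod_cast hr
    linarith
  nlinarith [mul_le_mul_of_nonneg_left hα hr1, key]
end
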